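/- Let m > 1 be a real number, l a natural number with l < m − 1, and ω a complex number not lying in the half-line [0, ∞). Then the integral ∫_0^∞ k^l / (ω − k^m) dk converges absolutely and equals −(π / (m · sin(π(l+1)/m))) · (−ω)^{((l+1)/m) − 1}, where the complex power is taken with the principal branch of the logarithm. -/

import Mathlib

open MeasureTheory Complex Filter Topology
open Set

lemma aux_lower {z : ℂ} (hz : z ∈ Complex.slitPlane) :
    ∃ c > 0, ∀ t : ℝ, 0 ≤ t → c ≤ ‖((t : ℂ) + z)‖ := by
  rcases le_or_gt 0 z.re with h | h
  · refine ⟨‖z‖, norm_pos_iff.mpr (Complex.slitPlane_ne_zero hz), fun t ht => ?_⟩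
    rw [Complex.norm_def, Complex.norm_def, Complex.normSq_apply, Complex.normSq_apply]
    apply Real.sqrt_le_sqrt
    simp only [Complex.add_re, Complex.add_im, Complex.ofReal_re, Complex.ofReal_im, zero_add]
    nlinarith
  · have him : z.im ≠ 0 := (Complex.mem_slitPlane_iff.mp hz).resolve_left (by linarith)
    refine ⟨|z.im|, abs_pos.mpr him, fun t ht => ?_⟩
    have h2 := Complex.abs_im_le_norm ((t:ℂ) + z)
    simpa using h2
lemma aux_integrable {a : ℝ} (ha : 0 < a) {T c C : ℝ} (hT : 0 < T) (ha2 : a < 1)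
    (g : ℝ → ℂ) (hg : AEStronglyMeasurable g (volume.restrict (Set.Ioi 0)))
    (h1 : ∀ t : ℝ, 0 < t → t ≤ T → ‖g t‖ ≤ c * t ^ (a - 1))
    (h2 : ∀ t : ℝ, T < t → ‖g t‖ ≤ C * t ^ (a - 2)) :
    IntegrableOn g (Set.Ioi 0) := by
  have hsplit : Set.Ioi (0:ℝ) = Set.Ioc 0 T ∪ Set.Ioi T := (Set.Ioc_union_Ioi_eq_Ioi hT.le).symm
  rw [hsplit]
  apply MeasureTheory.IntegrableOn.union
  · have hb : IntegrableOn (fun t : ℝ => c * t ^ (a-1)) (Set.Ioc 0 T) :=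
      ((intervalIntegrable_iff_integrableOn_Ioc_of_le hT.le).mp
        (intervalIntegral.intervalIntegrable_rpow' (by linarith))).const_mul c
    refine Integrable.mono' hb (hg.mono_measure (Measure.restrict_mono Set.Ioc_subset_Ioi_self le_rfl)) ?_
    refine (ae_restrict_iff' measurableSet_Ioc).mpr (Filter.Eventually.of_forall fun t ht => ?_)
    exact h1 t ht.1 ht.2
  · have hb : IntegrableOn (fun t : ℝ => C * t ^ (a-2)) (Set.Ioi T) :=
      (integrableOn_Ioi_rpow_of_lt (by linarith) hT).const_mul C
    refine Integrable.mono' hb (hg.mono_measure (Measure.restrict_mono (Set.Ioi_subset_Ioi hT.le) le_rfl)) ?_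
    refine (ae_restrict_iff' measurableSet_Ioi).mpr (Filter.Eventually.of_forall fun t ht => ?_)
    exact h2 t ht
lemma aux_cont {a : ℝ} {z : ℂ} (hz : ∀ t : ℝ, 0 ≤ t → (t:ℂ) + z ≠ 0) :
    ContinuousOn (fun t : ℝ => ((t ^ (a-1) : ℝ) : ℂ) / ((t:ℂ) + z)) (Set.Ioi 0) := by
  apply ContinuousOn.div
  · exact Complex.continuous_ofReal.comp_continuousOn
      (continuousOn_id.rpow_const fun t ht => Or.inl (ne_of_gt ht))
  · exact (Complex.continuous_ofReal.continuousOn.add continuousOn_const)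
  · exact fun t ht => hz t (le_of_lt ht)
lemma aux_deriv (A : ℂ) (t : ℝ) {z : ℂ} (hz : (t:ℂ) + z ≠ 0) :
    HasDerivAt (fun w : ℂ => A / ((t:ℂ) + w)) (-(A / ((t:ℂ) + z)^2)) z := by
  have h := (((hasDerivAt_id z).const_add (t:ℂ)).inv hz).const_mul A
  simpa [div_eq_mul_inv, neg_div, mul_div_assoc] using h

lemma aux_norm (a t : ℝ) (ht : 0 < t) (w : ℂ) :
    ‖((t ^ (a-1) : ℝ) : ℂ) / w‖ = t ^ (a-1) / ‖w‖ := by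
  rw [norm_div, Complex.norm_real, Real.norm_eq_abs,
    _root_.abs_of_nonneg (Real.rpow_nonneg ht.le _)]
lemma aux_rpow_sub (a t : ℝ) (ht : 0 < t) : t ^ (a-1) * t⁻¹ = t ^ (a-2) := by
  rw [← Real.rpow_neg_one t, ← Real.rpow_add ht]; ring_nf

-- generic integrability given a uniform lower bound on |t+z|
lemma aux_int_f {a : ℝ} (ha : 0 < a) (ha2 : a < 1) {z : ℂ} {c : ℝ} (hc : 0 < c)
    (hlow : ∀ t : ℝ, 0 ≤ t → c ≤ ‖((t:ℂ) + z)‖) :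
    IntegrableOn (fun t : ℝ => ((t ^ (a-1) : ℝ) : ℂ) / ((t:ℂ) + z)) (Set.Ioi 0) := by
  have hne : ∀ t : ℝ, 0 ≤ t → (t:ℂ) + z ≠ 0 := fun t ht h0 => by
    have := hlow t ht; rw [h0] at this; simp at this; linarith
  set T : ℝ := 2 * ‖z‖ + 1 with hTdef
  have hT : 0 < T := by positivity
  apply aux_integrable ha hT ha2 _ ((aux_cont hne).aestronglyMeasurable measurableSet_Ioi)
    (c := c⁻¹) (C := 2)
  · intro t ht _
    rw [aux_norm a t ht]
    calc t ^ (a-1) / ‖((t:ℂ) + z)‖ ≤ t ^ (a-1) / c := by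
          gcongr
          exact hlow t ht.le
      _ = c⁻¹ * t ^ (a-1) := by rw [div_eq_mul_inv, mul_comm]
  · intro t ht
    have ht0 : (0:ℝ) < t := lt_trans hT ht
    have habs : t / 2 ≤ ‖((t:ℂ) + z)‖ := by
      have h1 : ‖((t:ℂ))‖ ≤ ‖((t:ℂ) + z)‖ + ‖z‖ := by
        have := norm_add_le ((t:ℂ) + z) (-z)
        simpa using this
      have h2 : ‖((t:ℂ))‖ = t := by
        rw [Complex.norm_real, Real.norm_eq_abs, abs_of_pos ht0]
      nlinarith [norm_nonneg z]
    rw [aux_norm a t ht0]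
    calc t ^ (a-1) / ‖((t:ℂ) + z)‖ ≤ t ^ (a-1) / (t/2) := by
          gcongr
      _ = 2 * t ^ (a-2) := by
          rw [div_div_eq_mul_div, mul_comm (t ^ (a-1)) 2, mul_div_assoc, div_eq_mul_inv,
            aux_rpow_sub a t ht0]

lemma aux_F_diff {a : ℝ} (ha : 0 < a) (ha2 : a < 1) {z₀ : ℂ} (hz₀ : z₀ ∈ Complex.slitPlane) :
    DifferentiableAt ℂ
      (fun z : ℂ => ∫ t in Set.Ioi (0:ℝ), ((t ^ (a-1) : ℝ) : ℂ) / ((t:ℂ) + z)) z₀ := by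
  obtain ⟨c, hc, hlow⟩ := aux_lower hz₀
  set ε : ℝ := c / 2 with hεdef
  have hε : 0 < ε := by positivity
  -- lower bound on the ball
  have hball : ∀ z ∈ Metric.ball z₀ ε, ∀ t : ℝ, 0 ≤ t → c/2 ≤ ‖((t:ℂ) + z)‖ := by
    intro z hz t ht
    have h1 : ‖((t:ℂ) + z₀)‖ ≤ ‖((t:ℂ) + z)‖ + ‖(z₀ - z)‖ := by
      have := norm_add_le ((t:ℂ) + z) (z₀ - z)
      simpa [add_sub_cancel, add_assoc] using this
    have h2 : ‖(z₀ - z)‖ < ε := by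
      rw [← Complex.dist_eq, dist_comm]; exact hz
    have := hlow t ht
    simp only [hεdef] at h2 ⊢
    linarith
  have hne : ∀ z ∈ Metric.ball z₀ ε, ∀ t : ℝ, 0 ≤ t → (t:ℂ) + z ≠ 0 := by
    intro z hz t ht h0
    have := hball z hz t ht; rw [h0] at this; simp at this; linarith
  set R : ℝ := ‖z₀‖ + ε with hRdef
  have hzR : ∀ z ∈ Metric.ball z₀ ε, ‖z‖ ≤ R := by
    intro z hz
    have h1 : ‖z‖ ≤ ‖z₀‖ + ‖(z - z₀)‖ := by
      have := norm_add_le z₀ (z - z₀); simpa [add_sub_cancel] using this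
    have h2 : ‖(z - z₀)‖ < ε := by rw [← Complex.dist_eq]; exact hz
    simp only [hRdef]; linarith
  set T : ℝ := 2 * R + 1 with hTdef
  have hT : 0 < T := by positivity
  -- the dominating function
  set bound : ℝ → ℝ := fun t =>
    if t ≤ T then (2/c)^2 * t ^ (a-1) else (4/c) * t ^ (a-2) with hbdef
  have hbound_int : IntegrableOn bound (Set.Ioi 0) := by
    have hsplit : Set.Ioi (0:ℝ) = Set.Ioc 0 T ∪ Set.Ioi T := (Set.Ioc_union_Ioi_eq_Ioi hT.le).symm
    rw [hsplit]
    apply MeasureTheory.IntegrableOn.union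
    · have hb : IntegrableOn (fun t : ℝ => (2/c)^2 * t ^ (a-1)) (Set.Ioc 0 T) :=
        ((intervalIntegrable_iff_integrableOn_Ioc_of_le hT.le).mp
          (intervalIntegral.intervalIntegrable_rpow' (by linarith))).const_mul _
      exact hb.congr_fun (fun t ht => by simp [hbdef, ht.2]) measurableSet_Ioc
    · have hb : IntegrableOn (fun t : ℝ => (4/c) * t ^ (a-2)) (Set.Ioi T) :=
        (integrableOn_Ioi_rpow_of_lt (by linarith) hT).const_mul _
      exact hb.congr_fun (fun t ht => by simp [hbdef, not_le.mpr (Set.mem_Ioi.mp ht)])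
        measurableSet_Ioi
  -- bound on the derivative
  have hkey : ∀ t : ℝ, 0 < t → ∀ z ∈ Metric.ball z₀ ε,
      ‖-(((t ^ (a-1) : ℝ) : ℂ) / ((t:ℂ) + z)^2)‖ ≤ bound t := by
    intro t ht z hz
    have hlow' := hball z hz t ht.le
    have habs2 : ‖(((t:ℂ) + z)^2)‖ = ‖((t:ℂ) + z)‖^2 := by
      rw [norm_pow]
    rw [norm_neg, aux_norm a t ht, habs2]
    by_cases hcase : t ≤ T
    · rw [hbdef]
      simp only [if_pos hcase]
      calc t ^ (a-1) / ‖((t:ℂ) + z)‖^2 ≤ t ^ (a-1) / (c/2)^2 := by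
            gcongr
          _ = (2/c)^2 * t ^ (a-1) := by
            rw [div_eq_mul_inv, mul_comm]; congr 1
            rw [← inv_pow]; congr 1
            field_simp
    · rw [hbdef]
      simp only [if_neg hcase]
      push_neg at hcase
      have ht0 : (0:ℝ) < t := lt_trans hT hcase
      have habs : t/2 ≤ ‖((t:ℂ) + z)‖ := by
        have h1 : ‖((t:ℂ))‖ ≤ ‖((t:ℂ) + z)‖ + ‖z‖ := by
          have := norm_add_le ((t:ℂ) + z) (-z)
          simpa using this
        have h2 : ‖((t:ℂ))‖ = t := by rw [Complex.norm_real, Real.norm_eq_abs, abs_of_pos ht0]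
        have h3 := hzR z hz
        simp only [hTdef] at hcase
        linarith
      have hprod : (c/2)*(t/2) ≤ ‖((t:ℂ) + z)‖^2 := by
        rw [sq]
        exact mul_le_mul hlow' habs (by positivity) (norm_nonneg _)
      calc t ^ (a-1) / ‖((t:ℂ) + z)‖^2 ≤ t ^ (a-1) / ((c/2)*(t/2)) := by
            gcongr
          _ = (4/c) * t ^ (a-2) := by
            have hinv : ((c/2)*(t/2))⁻¹ = (4/c) * t⁻¹ := by
              field_simp; ring
            rw [div_eq_mul_inv, hinv, ← mul_assoc, mul_comm (t ^ (a-1)) (4/c), mul_assoc,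
              aux_rpow_sub a t ht0]
  -- now apply differentiation under the integral sign
  have hmain := hasDerivAt_integral_of_dominated_loc_of_deriv_le
    (F := fun (z : ℂ) (t : ℝ) => ((t ^ (a-1) : ℝ) : ℂ) / ((t:ℂ) + z))
    (F' := fun (z : ℂ) (t : ℝ) => -(((t ^ (a-1) : ℝ) : ℂ) / ((t:ℂ) + z)^2))
    (μ := volume.restrict (Set.Ioi 0)) (x₀ := z₀) (bound := bound) (Metric.ball_mem_nhds z₀ hε)
    ?_ ?_ ?_ ?_ hbound_int ?_
  · exact hmain.2.differentiableAt
  · filter_upwards [Metric.ball_mem_nhds z₀ hε] with z hz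
    exact (aux_cont (hne z hz)).aestronglyMeasurable measurableSet_Ioi
  · exact aux_int_f ha ha2 (half_pos hc) (hball z₀ (Metric.mem_ball_self hε))
  · refine ((ContinuousOn.div ?_ ?_ ?_).neg).aestronglyMeasurable measurableSet_Ioi
    · exact Complex.continuous_ofReal.comp_continuousOn
        (continuousOn_id.rpow_const fun t ht => Or.inl (ne_of_gt ht))
    · exact (Complex.continuous_ofReal.continuousOn.add continuousOn_const).pow 2
    · exact fun t ht => pow_ne_zero 2 (hne z₀ (Metric.mem_ball_self hε) t (le_of_lt ht))
  · refine (ae_restrict_iff' measurableSet_Ioi).mpr (Filter.Eventually.of_forall ?_)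
    exact fun t ht z hz => hkey t ht z hz
  · refine (ae_restrict_iff' measurableSet_Ioi).mpr (Filter.Eventually.of_forall ?_)
    exact fun t ht z hz => aux_deriv _ t (hne z hz t (le_of_lt ht))

lemma aux_rpow_key {a x : ℝ} (hx : 0 < x) : x ^ (1-a) * x * ((x^2)⁻¹) = x ^ (-a) := by
  have h2 : (x:ℝ)^2 = x ^ (2:ℝ) := by
    rw [← Real.rpow_natCast x 2]; norm_num
  calc x ^ (1-a) * x * ((x^2)⁻¹) = x ^ (1-a) * x ^ (1:ℝ) * x ^ (-2:ℝ) := by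
        rw [Real.rpow_one, h2, ← Real.rpow_neg hx.le]
    _ = x ^ ((1-a) + 1 + -2) := by rw [← Real.rpow_add hx, ← Real.rpow_add hx]
    _ = x ^ (-a) := by ring_nf

-- base integral via Beta function
lemma aux_base {a : ℝ} (ha : 0 < a) (ha2 : a < 1) :
    ∫ t in Set.Ioi (0:ℝ), ((t ^ (a-1) : ℝ) : ℂ) / ((t:ℂ) + 1)
      = ((Real.pi / Real.sin (Real.pi * a) : ℝ) : ℂ) := by
  set f : ℝ → ℝ := fun s => s / (1-s) with hfdef
  set f' : ℝ → ℝ := fun s => ((1-s)^2)⁻¹ with hf'def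
  have himg : f '' Set.Ioo 0 1 = Set.Ioi 0 := by
    ext t; constructor
    · rintro ⟨s, hs, rfl⟩
      have h1 : 0 < 1 - s := by linarith [hs.2]
      exact div_pos hs.1 h1
    · intro ht
      rw [Set.mem_Ioi] at ht
      refine ⟨t / (1+t), ⟨by positivity, ?_⟩, ?_⟩
      · rw [div_lt_one (by linarith : (0:ℝ) < 1 + t)]; linarith
      · simp only [hfdef]
        have h1 : (0:ℝ) < 1 + t := by linarith
        field_simp; ring
  have hderiv : ∀ s ∈ Set.Ioo (0:ℝ) 1, HasDerivWithinAt f (f' s) (Set.Ioo 0 1) s := by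
    intro s hs
    have h1 : 1 - s ≠ 0 := by
      simp only [Set.mem_Ioo] at hs; intro h; linarith [sub_eq_zero.mp h]
    have := (hasDerivAt_id s).div ((hasDerivAt_id s).const_sub 1) h1
    refine this.hasDerivWithinAt.congr_deriv ?_
    simp only [hf'def, id]
    field_simp
    ring
  have hinj : Set.InjOn f (Set.Ioo 0 1) := by
    intro x hx y hy h
    simp only [hfdef] at h
    rw [div_eq_div_iff (by linarith [hx.2] : (0:ℝ) < 1 - x).ne'
      (by linarith [hy.2] : (0:ℝ) < 1 - y).ne'] at h
    nlinarith
  have hcv := integral_image_eq_integral_abs_deriv_smul measurableSet_Ioo hderiv hinj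
    (fun t : ℝ => ((t ^ (a-1) : ℝ) : ℂ) / ((t:ℂ) + 1))
  rw [himg] at hcv
  rw [hcv]
  -- pointwise simplification
  have hpt : ∀ s ∈ Set.Ioo (0:ℝ) 1,
      |f' s| • (((f s ^ (a-1) : ℝ) : ℂ) / ((f s : ℂ) + 1))
        = (s:ℂ) ^ ((a:ℂ) - 1) * (1 - (s:ℂ)) ^ ((1 - (a:ℂ)) - 1) := by
    intro s hs
    obtain ⟨hs0, hs1⟩ := hs
    have hu : (0:ℝ) < 1 - s := by linarith
    have hfs : f s = s / (1-s) := rfl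
    have hfpos : 0 < f s := div_pos hs0 hu
    have hreal : f s + 1 = (1-s)⁻¹ := by rw [hfs]; field_simp; ring
    have hadd : ((f s : ℝ) : ℂ) + 1 = (((1-s)⁻¹ : ℝ) : ℂ) := by
      rw [← hreal]; push_cast; ring
    have hval : f s ^ (a-1) = s ^ (a-1) * (1-s) ^ (1-a) := by
      rw [hfs, Real.div_rpow hs0.le hu.le, div_eq_mul_inv, ← Real.rpow_neg hu.le]
      congr 1
      ring
    have hsmul : |f' s| = ((1-s)^2)⁻¹ := by
      rw [hf'def]; exact abs_of_pos (by positivity)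
    have h1 : (s:ℂ) ^ ((a:ℂ)-1) = ((s ^ (a-1) : ℝ) : ℂ) := by
      rw [show ((a:ℂ)-1) = (((a-1):ℝ):ℂ) by push_cast; ring, ← Complex.ofReal_cpow hs0.le]
    have h2 : (1-(s:ℂ)) ^ ((1-(a:ℂ))-1) = (((1-s) ^ (-a) : ℝ) : ℂ) := by
      rw [show (1-(s:ℂ)) = (((1-s):ℝ):ℂ) by push_cast; ring,
        show ((1-(a:ℂ))-1) = (((-a):ℝ):ℂ) by push_cast; ring, ← Complex.ofReal_cpow hu.le]
    rw [hadd, hsmul, hval, h1, h2, Complex.real_smul, ← Complex.ofReal_div,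
      ← Complex.ofReal_mul, ← Complex.ofReal_mul]
    congr 1
    rw [div_inv_eq_mul]
    calc ((1-s)^2)⁻¹ * (s ^ (a-1) * (1-s) ^ (1-a) * (1-s))
        = s ^ (a-1) * ((1-s) ^ (1-a) * (1-s) * ((1-s)^2)⁻¹) := by ring
      _ = s ^ (a-1) * (1-s) ^ (-a) := by rw [aux_rpow_key hu]
  rw [setIntegral_congr_fun measurableSet_Ioo hpt]
  -- identify with Beta integral
  have hbeta : Complex.betaIntegral (a:ℂ) (1-(a:ℂ))
      = ∫ s in Set.Ioo (0:ℝ) 1, (s:ℂ) ^ ((a:ℂ) - 1) * (1 - (s:ℂ)) ^ ((1 - (a:ℂ)) - 1) := by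
    rw [Complex.betaIntegral, intervalIntegral.integral_of_le zero_le_one,
      integral_Ioc_eq_integral_Ioo]
  rw [← hbeta]
  have h1 : 0 < Complex.re (a:ℂ) := by simpa using ha
  have h2 : 0 < Complex.re (1-(a:ℂ)) := by
    simp only [Complex.sub_re, Complex.one_re, Complex.ofReal_re]; linarith
  have hG := Complex.Gamma_mul_Gamma_eq_betaIntegral h1 h2
  rw [show ((a:ℂ) + (1 - (a:ℂ))) = 1 by ring, Complex.Gamma_one, one_mul] at hG
  rw [← hG, Complex.Gamma_mul_Gamma_one_sub]
  push_cast [Complex.ofReal_sin]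
  ring_nf

lemma aux_scale {a : ℝ} {x : ℝ} (hx : 0 < x) :
    ∫ t in Set.Ioi (0:ℝ), ((t ^ (a-1) : ℝ) : ℂ) / ((t:ℂ) + (x:ℂ))
      = ((x ^ (a-1) : ℝ) : ℂ) * ∫ t in Set.Ioi (0:ℝ), ((t ^ (a-1) : ℝ) : ℂ) / ((t:ℂ) + 1) := by
  have hcomp := MeasureTheory.integral_comp_mul_left_Ioi
    (fun t : ℝ => ((t ^ (a-1) : ℝ) : ℂ) / ((t:ℂ) + (x:ℂ))) 0 hx
  rw [mul_zero] at hcomp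
  -- hcomp : ∫ u in Ioi 0, g (x * u) = x⁻¹ • ∫ t in Ioi 0, g t
  have hpt : ∀ u ∈ Set.Ioi (0:ℝ),
      (((x * u) ^ (a-1) : ℝ) : ℂ) / (((x*u : ℝ):ℂ) + (x:ℂ))
        = (((x ^ (a-1) : ℝ) : ℂ) / (x:ℂ)) * (((u ^ (a-1) : ℝ) : ℂ) / ((u:ℂ) + 1)) := by
    intro u hu
    rw [Set.mem_Ioi] at hu
    have hxne : (x:ℂ) ≠ 0 := Complex.ofReal_ne_zero.mpr hx.ne'
    have hune : ((u:ℂ) + 1) ≠ 0 := by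
      intro h
      have : ((u + 1 : ℝ) : ℂ) = 0 := by push_cast; rw [← h]
      rw [Complex.ofReal_eq_zero] at this
      linarith
    have hnum : ((x * u) ^ (a-1) : ℝ) = x ^ (a-1) * u ^ (a-1) :=
      Real.mul_rpow hx.le hu.le
    have hden : ((x*u : ℝ):ℂ) + (x:ℂ) = (x:ℂ) * ((u:ℂ) + 1) := by push_cast; ring
    rw [hnum, hden]
    push_cast
    field_simp
  rw [setIntegral_congr_fun measurableSet_Ioi hpt, integral_const_mul] at hcomp
  have hcomp' : (((x ^ (a-1) : ℝ) : ℂ) / (x:ℂ)) * (∫ u in Set.Ioi (0:ℝ),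
        ((u ^ (a-1) : ℝ) : ℂ) / ((u:ℂ) + 1))
      = x⁻¹ • ∫ t in Set.Ioi (0:ℝ), ((t ^ (a-1) : ℝ) : ℂ) / ((t:ℂ) + (x:ℂ)) := hcomp
  have hI : (∫ t in Set.Ioi (0:ℝ), ((t ^ (a-1) : ℝ) : ℂ) / ((t:ℂ) + (x:ℂ)))
      = (x:ℝ) • ((((x ^ (a-1) : ℝ) : ℂ) / (x:ℂ)) * ∫ t in Set.Ioi (0:ℝ),
          ((t ^ (a-1) : ℝ) : ℂ) / ((t:ℂ) + 1)) := by
    rw [hcomp', smul_smul, mul_inv_cancel₀ hx.ne', one_smul]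
  rw [hI, Complex.real_smul]
  have hxne : (x:ℂ) ≠ 0 := Complex.ofReal_ne_zero.mpr hx.ne'
  field_simp

lemma aux_preconn : IsPreconnected Complex.slitPlane := by
  have hpath : IsPathConnected Complex.slitPlane := by
    refine ⟨1, Complex.one_mem_slitPlane, ?_⟩
    intro y hy
    exact JoinedIn.of_segment_subset (Complex.starConvex_one_slitPlane.segment_subset hy)
  exact hpath.isConnected.isPreconnected
lemma aux_key {a : ℝ} (ha : 0 < a) (ha2 : a < 1) {z : ℂ} (hz : z ∈ Complex.slitPlane) :
    ∫ t in Set.Ioi (0:ℝ), ((t ^ (a-1) : ℝ) : ℂ) / ((t:ℂ) + z)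
      = ((Real.pi / Real.sin (Real.pi * a) : ℝ) : ℂ) * z ^ ((a:ℂ) - 1) := by
  set F : ℂ → ℂ := fun w => ∫ t in Set.Ioi (0:ℝ), ((t ^ (a-1) : ℝ) : ℂ) / ((t:ℂ) + w) with hF
  set G : ℂ → ℂ := fun w => ((Real.pi / Real.sin (Real.pi * a) : ℝ) : ℂ) * w ^ ((a:ℂ) - 1)
    with hG
  have hFa : AnalyticOnNhd ℂ F Complex.slitPlane := by
    apply DifferentiableOn.analyticOnNhd ?_ Complex.isOpen_slitPlane
    exact fun w hw => (aux_F_diff ha ha2 hw).differentiableWithinAt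
  have hGa : AnalyticOnNhd ℂ G Complex.slitPlane := by
    intro w hw
    exact analyticAt_const.mul ((analyticAt_id).cpow analyticAt_const hw)
  have heq : ∀ x : ℝ, 0 < x → F (x:ℂ) = G (x:ℂ) := by
    intro x hx
    rw [hF, hG]
    simp only
    rw [aux_scale hx, aux_base ha ha2,
      show ((a:ℂ)-1) = (((a-1):ℝ):ℂ) by push_cast; ring, ← Complex.ofReal_cpow hx.le]
    ring
  -- the sequence 1 + 1/(n+1) tends to 1 within {z ≠ 1}
  have htends : Tendsto (fun n : ℕ => ((1 + ((n:ℝ)+1)⁻¹ : ℝ) : ℂ)) atTop (𝓝[≠] (1:ℂ)) := by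
    rw [tendsto_nhdsWithin_iff]
    constructor
    · have h1 : Tendsto (fun n : ℕ => (1 + ((n:ℝ)+1)⁻¹ : ℝ)) atTop (𝓝 1) := by
        have := tendsto_one_div_add_atTop_nhds_zero_nat (𝕜 := ℝ)
        simpa [one_div] using tendsto_const_nhds.add this
      have := (Complex.continuous_ofReal.tendsto 1).comp h1
      simpa [Function.comp_def] using this
    · refine Filter.Eventually.of_forall fun n => ?_
      simp only [Set.mem_compl_iff, Set.mem_singleton_iff]
      intro h
      rw [show (1:ℂ) = ((1:ℝ):ℂ) by norm_num, Complex.ofReal_inj] at h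
      have : (0:ℝ) < ((n:ℝ)+1)⁻¹ := by positivity
      linarith
  have hfreq : ∃ᶠ w in 𝓝[≠] (1:ℂ), F w = G w :=
    htends.frequently (Filter.Eventually.frequently
      (Filter.Eventually.of_forall fun n => heq _ (by positivity)))
  exact hFa.eqOn_of_preconnected_of_frequently_eq hGa aux_preconn
    Complex.one_mem_slitPlane hfreq hz

/-- For `m > 1`, `l < m − 1`, and complex `ω` not on the half-line `[0, ∞)`, the
integral `∫_0^∞ k^l/(ω − k^m) dk` converges absolutely and equals
`−(π/(m sin(π(l+1)/m))) (−ω)^{(l+1)/m − 1}` with the principal branch power. -/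
theorem stmt5 (m : ℝ) (hm : 1 < m) (l : ℕ) (hl : (l : ℝ) < m - 1)
    (ω : ℂ) (hω : ∀ x : ℝ, 0 ≤ x → ω ≠ (x : ℂ)) :
    IntegrableOn (fun k : ℝ => (k : ℂ) ^ l / (ω - ((k ^ m : ℝ) : ℂ))) (Set.Ioi 0) ∧
      (∫ k in Set.Ioi (0 : ℝ), (k : ℂ) ^ l / (ω - ((k ^ m : ℝ) : ℂ))) =
        -(((Real.pi / (m * Real.sin (Real.pi * ((l : ℝ) + 1) / m)) : ℝ) : ℂ)) *
          (-ω) ^ (((((l : ℝ) + 1) / m - 1 : ℝ) : ℂ)) := by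
  have hm0 : (0:ℝ) < m := by linarith
  set a : ℝ := ((l:ℝ) + 1) / m with hadef
  have ha : 0 < a := by positivity
  have ha2 : a < 1 := by
    rw [hadef, div_lt_one hm0]; linarith
  have hma : m * a = (l:ℝ) + 1 := by rw [hadef]; field_simp
  set z : ℂ := -ω with hzdef
  have hzslit : z ∈ Complex.slitPlane := by
    rw [Complex.mem_slitPlane_iff]
    by_cases him : ω.im = 0
    · left
      have hωre : ω = ((ω.re : ℝ) : ℂ) := by
        apply Complex.ext <;> simp [him]
      have hneg : ω.re < 0 := by
        by_contra hcon
        push_neg at hcon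
        exact hω ω.re hcon hωre
      simp only [hzdef, Complex.neg_re]
      linarith
    · right
      simp only [hzdef, Complex.neg_im]
      exact neg_ne_zero.mpr him
  obtain ⟨c, hc, hlow⟩ := aux_lower hzslit
  -- the function after substitution y = k^m
  set G : ℝ → ℂ := fun y => -(((y ^ (a-1) : ℝ) : ℂ) / ((y:ℂ) + z)) with hGdef
  have hGint : IntegrableOn G (Set.Ioi 0) := (aux_int_f ha ha2 hc hlow).neg
  -- our integrand equals x^(m-1) • G (x^m) on Ioi 0
  have hEq : ∀ x : ℝ, x ∈ Set.Ioi (0:ℝ) →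
      x ^ (m-1) • G (x ^ m) = (x : ℂ) ^ l / (ω - ((x ^ m : ℝ) : ℂ)) := by
    intro x hx
    rw [Set.mem_Ioi] at hx
    have hxm : (0:ℝ) < x ^ m := Real.rpow_pos_of_pos hx m
    have hnum : (x ^ m) ^ (a - 1) = x ^ (m * (a-1)) := (Real.rpow_mul hx.le m (a-1)).symm
    have hexp : x ^ (m-1) * x ^ (m * (a-1)) = x ^ ((l:ℝ)) := by
      rw [← Real.rpow_add hx]
      congr 1
      have : m - 1 + m * (a - 1) = m * a - 1 := by ring
      rw [this, hma]; ring
    have hden : ω - ((x ^ m : ℝ) : ℂ) = -(((x ^ m : ℝ) : ℂ) + z) := by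
      rw [hzdef]; ring
    rw [hGdef]
    simp only
    rw [hden, div_neg, smul_neg, neg_inj, Complex.real_smul, hnum, ← mul_div_assoc,
      ← Complex.ofReal_mul, hexp, Real.rpow_natCast]
    push_cast
    ring
  constructor
  · have hiff := integrableOn_Ioi_comp_rpow_iff' G (p := m) hm0.ne'
    have h1 : IntegrableOn (fun x : ℝ => x ^ (m-1) • G (x ^ m)) (Set.Ioi 0) := hiff.mpr hGint
    exact (h1.congr_fun hEq measurableSet_Ioi)
  · have hcomp := MeasureTheory.integral_comp_rpow_Ioi_of_pos (g := G) hm0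
    have hsmul : ∀ x : ℝ, x ∈ Set.Ioi (0:ℝ) →
        (m * x ^ (m-1)) • G (x ^ m) = (m:ℝ) • (x ^ (m-1) • G (x ^ m)) := by
      intro x _; rw [smul_smul]
    rw [setIntegral_congr_fun measurableSet_Ioi hsmul] at hcomp
    rw [setIntegral_congr_fun measurableSet_Ioi
      (fun x hx => by rw [hEq x hx] : ∀ x ∈ Set.Ioi (0:ℝ),
        (m:ℝ) • (x ^ (m-1) • G (x ^ m)) = (m:ℝ) • ((x : ℂ) ^ l / (ω - ((x ^ m : ℝ) : ℂ))))] at hcomp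
    rw [integral_smul] at hcomp
    -- hcomp : m • ∫ ourf = ∫ G
    have hGval : ∫ y in Set.Ioi (0:ℝ), G y
        = -((( Real.pi / Real.sin (Real.pi * a) : ℝ) : ℂ) * z ^ ((a:ℂ) - 1)) := by
      rw [hGdef]
      rw [integral_neg, aux_key ha ha2 hzslit]
    rw [hGval] at hcomp
    have hmne : (m:ℂ) ≠ 0 := Complex.ofReal_ne_zero.mpr hm0.ne'
    have : (∫ k in Set.Ioi (0:ℝ), (k : ℂ) ^ l / (ω - ((k ^ m : ℝ) : ℂ)))
        = (m:ℂ)⁻¹ * -(((Real.pi / Real.sin (Real.pi * a) : ℝ) : ℂ) * z ^ ((a:ℂ) - 1)) := by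
      rw [← hcomp, Complex.real_smul, ← mul_assoc, inv_mul_cancel₀ hmne, one_mul]
    rw [this]
    have harg : Real.pi * ((l:ℝ) + 1) / m = Real.pi * a := by rw [hadef]; ring
    have hexp2 : ((((l:ℝ) + 1) / m - 1 : ℝ) : ℂ) = (a:ℂ) - 1 := by
      rw [hadef]; push_cast; ring
    rw [harg, hexp2]
    push_cast
    field_simp
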